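/- Let d ≥ 2, let G = (V,E) be a strongly connected directed graph on vertices {1,…,n}, and let A = [a_ij] be a weight matrix for G satisfying a_ii > √2 · Σ_{j≠i} a_ij for every i. Let x = (x_1,…,x_n) be any configuration of unit vectors in ℝ^d and set y = f_A(x) with components y_i. Then for every choice of real d×(d−1) matrices R_1,…,R_n and S_1,…,S_n with orthonormal columns satisfying R_i^T x_i = 0 and S_i^T y_i = 0 for all i, the n(d−1)×n(d−1) block matrix whose (i,j) block is a_ij · S_i^T R_j is invertible. (Equivalently, the determinant of the differential of f_A at x, represented in any orthonormal tangent bases, is nonzero at every point.) -/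
import Mathlib


open scoped BigOperators InnerProductSpace

lemma aux_span {d : ℕ} (hd : 1 ≤ d) (y : EuclideanSpace ℝ (Fin d)) (hy : ‖y‖ = 1)
    (S : Fin (d - 1) → EuclideanSpace ℝ (Fin d)) (hS : Orthonormal ℝ S)
    (hSy : ∀ a, ⟪S a, y⟫_ℝ = 0) (z : EuclideanSpace ℝ (Fin d))
    (hzS : ∀ a, ⟪S a, z⟫_ℝ = 0) (hzy : ⟪y, z⟫_ℝ = 0) : z = 0 := by
  classical
  set G : Fin (d - 1) ⊕ Unit → EuclideanSpace ℝ (Fin d) := Sum.elim S (fun _ => y) with hG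
  have hGon : Orthonormal ℝ G := by
    rw [orthonormal_iff_ite]
    rintro (a | ⟨⟩) (b | ⟨⟩)
    · simp only [hG, Sum.elim_inl, Sum.inl.injEq]
      exact orthonormal_iff_ite.mp hS a b
    · simp only [hG, Sum.elim_inl, Sum.elim_inr]
      rw [if_neg (by simp), hSy a]
    · simp only [hG, Sum.elim_inl, Sum.elim_inr]
      rw [if_neg (by simp), real_inner_comm, hSy b]
    · simp only [hG, Sum.elim_inr]
      rw [if_pos trivial, real_inner_self_eq_norm_sq, hy]
      norm_num
  have hcard : Fintype.card (Fin (d - 1) ⊕ Unit) = Module.finrank ℝ (EuclideanSpace ℝ (Fin d)) := by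
    simp only [Fintype.card_sum, Fintype.card_fin, Fintype.card_unit, finrank_euclideanSpace_fin]
    omega
  have hne : Nonempty (Fin (d - 1) ⊕ Unit) := ⟨Sum.inr ()⟩
  let b := basisOfLinearIndependentOfCardEqFinrank hGon.linearIndependent hcard
  have hb : ⇑b = G := coe_basisOfLinearIndependentOfCardEqFinrank _ _
  have hzero : ⟪(∑ k, b.repr z k • b k), z⟫_ℝ = 0 := by
    rw [sum_inner]
    refine Finset.sum_eq_zero fun k _ => ?_
    rw [real_inner_smul_left, hb]
    rcases k with a | ⟨⟩
    · simp only [hG, Sum.elim_inl]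
      rw [hzS a, mul_zero]
    · simp only [hG, Sum.elim_inr]
      rw [hzy, mul_zero]
  rw [b.sum_repr z] at hzero
  exact inner_self_eq_zero.mp hzero


set_option maxHeartbeats 800000 in
lemma aux_contra {n d : ℕ} (x u : Fin n → EuclideanSpace ℝ (Fin d)) (hx : ∀ j, ‖x j‖ = 1)
    (hux : ∀ j, ⟪u j, x j⟫_ℝ = 0) (a : Fin n → ℝ) (ha : ∀ j, 0 ≤ a j) (i : Fin n) (l : ℝ)
    (hdd : Real.sqrt 2 * ∑ j ∈ Finset.univ.erase i, a j < a i)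
    (hkey : ∑ j, a j • (u j - l • x j) = 0)
    (hmax : ∀ j, ‖u j‖ ≤ ‖u i‖) (hm : 0 < ‖u i‖) : False := by
  classical
  set m : ℝ := ‖u i‖ with hmdef
  set t : ℝ := Real.sqrt (m ^ 2 + l ^ 2) with htdef
  set Bi : ℝ := ∑ j ∈ Finset.univ.erase i, a j with hBdef
  have hBnn : 0 ≤ Bi := Finset.sum_nonneg fun j _ => ha j
  have ht0 : 0 ≤ t := Real.sqrt_nonneg _
  have ht2 : t ^ 2 = m ^ 2 + l ^ 2 := Real.sq_sqrt (by positivity)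
  -- norm bound
  have hnorm : ∀ j, ‖u j - l • x j‖ ≤ t := by
    intro j
    have h1 : ‖u j - l • x j‖ ^ 2 = ‖u j‖ ^ 2 + l ^ 2 := by
      rw [norm_sub_sq_real, real_inner_smul_right, hux j, norm_smul, Real.norm_eq_abs, hx j,
        mul_one, mul_zero, mul_zero, sub_zero, sq_abs]
    have h2 : ‖u j - l • x j‖ = Real.sqrt (‖u j‖ ^ 2 + l ^ 2) := by
      rw [← h1, Real.sqrt_sq (norm_nonneg _)]
    rw [h2, htdef]
    exact Real.sqrt_le_sqrt (by nlinarith [hmax j, norm_nonneg (u j)])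
  -- inner product with u i
  have hP1 : (0:ℝ) = ∑ j, a j * ⟪u i, u j - l • x j⟫_ℝ := by
    calc (0:ℝ) = ⟪u i, (0 : EuclideanSpace ℝ (Fin d))⟫_ℝ := (inner_zero_right _).symm
      _ = ⟪u i, ∑ j, a j • (u j - l • x j)⟫_ℝ := by rw [hkey]
      _ = ∑ j, a j * ⟪u i, u j - l • x j⟫_ℝ := by
          rw [inner_sum]
          exact Finset.sum_congr rfl fun j _ => real_inner_smul_right _ _ _
  have hsplit1 : a i * ⟪u i, u i - l • x i⟫_ℝ
      + ∑ j ∈ Finset.univ.erase i, a j * ⟪u i, u j - l • x j⟫_ℝ = 0 :=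
    (Finset.add_sum_erase Finset.univ
      (fun j => a j * ⟪u i, u j - l • x j⟫_ℝ) (Finset.mem_univ i)).trans hP1.symm
  have hii1 : ⟪u i, u i - l • x i⟫_ℝ = m ^ 2 := by
    rw [inner_sub_right, real_inner_smul_right, hux i, real_inner_self_eq_norm_sq]
    ring
  rw [hii1] at hsplit1
  have e1 : a i * m ^ 2 ≤ Bi * (m * t) := by
    have heq : a i * m ^ 2 = -(∑ j ∈ Finset.univ.erase i, a j * ⟪u i, u j - l • x j⟫_ℝ) := by
      linarith
    calc a i * m ^ 2 = -(∑ j ∈ Finset.univ.erase i, a j * ⟪u i, u j - l • x j⟫_ℝ) := heq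
      _ ≤ |∑ j ∈ Finset.univ.erase i, a j * ⟪u i, u j - l • x j⟫_ℝ| := neg_le_abs _
      _ ≤ ∑ j ∈ Finset.univ.erase i, |a j * ⟪u i, u j - l • x j⟫_ℝ| :=
          Finset.abs_sum_le_sum_abs _ _
      _ ≤ ∑ j ∈ Finset.univ.erase i, a j * (m * t) := by
          refine Finset.sum_le_sum fun j _ => ?_
          rw [abs_mul, abs_of_nonneg (ha j)]
          refine mul_le_mul_of_nonneg_left ?_ (ha j)
          exact (abs_real_inner_le_norm _ _).trans
            (mul_le_mul_of_nonneg_left (hnorm j) (norm_nonneg _))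
      _ = Bi * (m * t) := by rw [← Finset.sum_mul]
  -- inner product with x i
  have hP2 : (0:ℝ) = ∑ j, a j * ⟪x i, u j - l • x j⟫_ℝ := by
    calc (0:ℝ) = ⟪x i, (0 : EuclideanSpace ℝ (Fin d))⟫_ℝ := (inner_zero_right _).symm
      _ = ⟪x i, ∑ j, a j • (u j - l • x j)⟫_ℝ := by rw [hkey]
      _ = ∑ j, a j * ⟪x i, u j - l • x j⟫_ℝ := by
          rw [inner_sum]
          exact Finset.sum_congr rfl fun j _ => real_inner_smul_right _ _ _
  have hsplit2 : a i * ⟪x i, u i - l • x i⟫_ℝ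
      + ∑ j ∈ Finset.univ.erase i, a j * ⟪x i, u j - l • x j⟫_ℝ = 0 :=
    (Finset.add_sum_erase Finset.univ
      (fun j => a j * ⟪x i, u j - l • x j⟫_ℝ) (Finset.mem_univ i)).trans hP2.symm
  have hxu : ⟪x i, u i⟫_ℝ = 0 := by rw [real_inner_comm]; exact hux i
  have hii2 : ⟪x i, u i - l • x i⟫_ℝ = -l := by
    rw [inner_sub_right, real_inner_smul_right, hxu, real_inner_self_eq_norm_sq, hx i]
    ring
  rw [hii2] at hsplit2
  have e2 : a i * |l| ≤ Bi * t := by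
    have heq : a i * l = ∑ j ∈ Finset.univ.erase i, a j * ⟪x i, u j - l • x j⟫_ℝ := by
      linarith
    calc a i * |l| = |a i * l| := by
          rw [abs_mul, abs_of_nonneg (ha i)]
      _ = |∑ j ∈ Finset.univ.erase i, a j * ⟪x i, u j - l • x j⟫_ℝ| := by rw [heq]
      _ ≤ ∑ j ∈ Finset.univ.erase i, |a j * ⟪x i, u j - l • x j⟫_ℝ| :=
          Finset.abs_sum_le_sum_abs _ _
      _ ≤ ∑ j ∈ Finset.univ.erase i, a j * t := by
          refine Finset.sum_le_sum fun j _ => ?_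
          rw [abs_mul, abs_of_nonneg (ha j)]
          refine mul_le_mul_of_nonneg_left ?_ (ha j)
          refine (abs_real_inner_le_norm _ _).trans ?_
          rw [hx i, one_mul]
          exact hnorm j
      _ = Bi * t := by rw [← Finset.sum_mul]
  -- final contradiction
  have hAm : a i * m ≤ Bi * t := by
    have h' : (a i * m) * m ≤ (Bi * t) * m := by
      calc (a i * m) * m = a i * m ^ 2 := by ring
        _ ≤ Bi * (m * t) := e1
        _ = (Bi * t) * m := by ring
    exact le_of_mul_le_mul_right h' hm
  have q1 : (a i * m) ^ 2 ≤ (Bi * t) ^ 2 :=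
    pow_le_pow_left₀ (mul_nonneg (ha i) hm.le) hAm 2
  have q2 : (a i * l) ^ 2 ≤ (Bi * t) ^ 2 := by
    rw [← sq_abs (a i * l), abs_mul, abs_of_nonneg (ha i)]
    exact pow_le_pow_left₀ (mul_nonneg (ha i) (abs_nonneg l)) e2 2
  have q3 : 2 * Bi ^ 2 < (a i) ^ 2 := by
    nlinarith [hdd, mul_nonneg (Real.sqrt_nonneg 2) hBnn,
      Real.sq_sqrt (show (0:ℝ) ≤ 2 by norm_num)]
  have hmsq : 0 < m ^ 2 + l ^ 2 := by nlinarith [sq_nonneg l, hm]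
  have q4 := mul_lt_mul_of_pos_right q3 hmsq
  nlinarith [q1, q2, q4, ht2]


/-- for a weight matrix `A` of a strongly connected directed graph with
`a_ii > √2 Σ_{j≠i} a_ij`, for any configuration `x` with image `y = f_A(x)`, and any
orthonormal tangent bases `R i` (at `x i`) and `S i` (at `y i`), the block matrix with
blocks `a_ij • S_iᵀ R_j` is invertible (the differential of `f_A` has nonzero determinant). -/
theorem stmt_6 (n d : ℕ) (hn : 1 ≤ n) (hd : 2 ≤ d)
    (E : Fin n → Fin n → Prop)
    (hconn : ∀ i j, Relation.ReflTransGen E i j)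
    (A : Matrix (Fin n) (Fin n) ℝ)
    (hApos : ∀ i j, 0 ≤ A i j)
    (hAE : ∀ i j, i ≠ j → (0 < A i j ↔ E i j))
    (hdd : ∀ i, Real.sqrt 2 * ∑ j ∈ Finset.univ.erase i, A i j < A i i)
    (x : Fin n → EuclideanSpace ℝ (Fin d)) (hx : ∀ i, ‖x i‖ = 1)
    (R S : Fin n → Fin (d - 1) → EuclideanSpace ℝ (Fin d))
    (hR : ∀ i, Orthonormal ℝ (R i)) (hS : ∀ i, Orthonormal ℝ (S i))
    (hRx : ∀ i a, ⟪R i a, x i⟫_ℝ = 0)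
    (hSy : ∀ i a, ⟪S i a, ‖∑ j, A i j • x j‖⁻¹ • ∑ j, A i j • x j⟫_ℝ = 0) :
    (Matrix.of fun p q : Fin n × Fin (d - 1) =>
        A p.1 q.1 * ⟪S p.1 p.2, R q.1 q.2⟫_ℝ).det ≠ 0 := by
  classical
  intro hdet
  obtain ⟨v, hv0, hMv⟩ := Matrix.exists_mulVec_eq_zero_iff.mpr hdet
  -- the tangent vectors determined by v
  set u : Fin n → EuclideanSpace ℝ (Fin d) := fun j => ∑ b, v (j, b) • R j b with hu
  have hvu : ∀ j b, ⟪R j b, u j⟫_ℝ = v (j, b) := by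
    intro j b
    rw [hu]
    exact (hR j).inner_right_fintype _ _
  have hux : ∀ j, ⟪u j, x j⟫_ℝ = 0 := by
    intro j
    rw [hu]
    simp only
    rw [sum_inner]
    refine Finset.sum_eq_zero fun b _ => ?_
    rw [real_inner_smul_left, hRx j b, mul_zero]
  -- the weighted sums are nonzero
  have hBnn : ∀ i, (0:ℝ) ≤ ∑ j ∈ Finset.univ.erase i, A i j :=
    fun i => Finset.sum_nonneg fun j _ => hApos i j
  have h12 : (1:ℝ) ≤ Real.sqrt 2 := by
    nlinarith [Real.sq_sqrt (show (0:ℝ) ≤ 2 by norm_num), Real.sqrt_nonneg 2]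
  have hsnorm : ∀ i, (0:ℝ) < ‖∑ j, A i j • x j‖ := by
    intro i
    have h1 : ∑ j, A i j • x j
        = A i i • x i + ∑ j ∈ Finset.univ.erase i, A i j • x j :=
      (Finset.add_sum_erase Finset.univ (fun j => A i j • x j) (Finset.mem_univ i)).symm
    have h2 : ‖∑ j ∈ Finset.univ.erase i, A i j • x j‖ ≤ ∑ j ∈ Finset.univ.erase i, A i j := by
      refine (norm_sum_le _ _).trans (Finset.sum_le_sum fun j _ => ?_)
      rw [norm_smul, Real.norm_eq_abs, abs_of_nonneg (hApos i j), hx j, mul_one]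
    have h3 : ‖A i i • x i‖ = A i i := by
      rw [norm_smul, Real.norm_eq_abs, abs_of_nonneg (hApos i i), hx i, mul_one]
    have h4 : A i i ≤ ‖∑ j, A i j • x j‖ + ∑ j ∈ Finset.univ.erase i, A i j := by
      have h5 : A i i • x i = (∑ j, A i j • x j) - ∑ j ∈ Finset.univ.erase i, A i j • x j := by
        rw [h1, add_sub_cancel_right]
      calc A i i = ‖A i i • x i‖ := h3.symm
        _ = ‖(∑ j, A i j • x j) - ∑ j ∈ Finset.univ.erase i, A i j • x j‖ := by rw [h5]
        _ ≤ ‖∑ j, A i j • x j‖ + ‖∑ j ∈ Finset.univ.erase i, A i j • x j‖ := norm_sub_le _ _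
        _ ≤ ‖∑ j, A i j • x j‖ + ∑ j ∈ Finset.univ.erase i, A i j := by linarith
    nlinarith [hdd i, hBnn i, h12, h4, mul_le_mul_of_nonneg_right h12 (hBnn i)]
  have hynorm : ∀ i,
      ‖(‖∑ j, A i j • x j‖⁻¹ • ∑ j, A i j • x j : EuclideanSpace ℝ (Fin d))‖ = 1 :=
    fun i => norm_smul_inv_norm (norm_pos_iff.mp (hsnorm i))
  -- kernel conditions
  have hSw : ∀ i a, ⟪S i a, ∑ j, A i j • u j⟫_ℝ = 0 := by
    intro i a
    have h0 := congrFun hMv (i, a)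
    have h : ∑ j, ∑ b, A i j * ⟪S i a, R j b⟫_ℝ * v (j, b) = 0 := by
      simpa [Matrix.mulVec, dotProduct, Fintype.sum_prod_type] using h0
    calc ⟪S i a, ∑ j, A i j • u j⟫_ℝ
        = ∑ j, A i j * ⟪S i a, u j⟫_ℝ := by
          rw [inner_sum]
          exact Finset.sum_congr rfl fun j _ => real_inner_smul_right _ _ _
      _ = ∑ j, ∑ b, A i j * ⟪S i a, R j b⟫_ℝ * v (j, b) := by
          refine Finset.sum_congr rfl fun j _ => ?_
          rw [hu]
          simp only
          rw [inner_sum, Finset.mul_sum]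
          refine Finset.sum_congr rfl fun b _ => ?_
          rw [real_inner_smul_right]
          ring
      _ = 0 := h
  -- w i is a multiple of the normalized sum
  have hw : ∀ i, ∑ j, A i j • u j =
      ⟪(‖∑ j, A i j • x j‖⁻¹ • ∑ j, A i j • x j : EuclideanSpace ℝ (Fin d)),
        ∑ j, A i j • u j⟫_ℝ • (‖∑ j, A i j • x j‖⁻¹ • ∑ j, A i j • x j) := by
    intro i
    set y : EuclideanSpace ℝ (Fin d) := ‖∑ j, A i j • x j‖⁻¹ • ∑ j, A i j • x j with hy
    set w : EuclideanSpace ℝ (Fin d) := ∑ j, A i j • u j with hwdef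
    have hz : w - ⟪y, w⟫_ℝ • y = 0 := by
      refine aux_span (by omega) y (hynorm i) (S i) (hS i) (hSy i) _ ?_ ?_
      · intro a
        rw [inner_sub_right, real_inner_smul_right, hSw i a, hSy i a, mul_zero, sub_zero]
      · rw [inner_sub_right, real_inner_smul_right, real_inner_self_eq_norm_sq, hynorm i]
        ring
    have := sub_eq_zero.mp hz
    exact this
  -- pick a nonzero coordinate and a maximizer
  obtain ⟨q, hq⟩ := Function.ne_iff.mp hv0
  have hune : u q.1 ≠ 0 := by
    intro h
    apply hq
    have h2 := hvu q.1 q.2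
    rw [h, inner_zero_right] at h2
    simpa using h2.symm
  obtain ⟨i, -, hmax⟩ := Finset.exists_max_image Finset.univ (fun j => ‖u j‖)
    ⟨q.1, Finset.mem_univ q.1⟩
  have hm : 0 < ‖u i‖ :=
    lt_of_lt_of_le (norm_pos_iff.mpr hune) (hmax q.1 (Finset.mem_univ q.1))
  -- the key relation
  set l : ℝ := ⟪(‖∑ j, A i j • x j‖⁻¹ • ∑ j, A i j • x j : EuclideanSpace ℝ (Fin d)),
      ∑ j, A i j • u j⟫_ℝ * ‖∑ j, A i j • x j‖⁻¹ with hl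
  have hkey : ∑ j, A i j • (u j - l • x j) = 0 := by
    calc ∑ j, A i j • (u j - l • x j)
        = (∑ j, A i j • u j) - l • ∑ j, A i j • x j := by
          rw [Finset.smul_sum, ← Finset.sum_sub_distrib]
          exact Finset.sum_congr rfl fun j _ => by rw [smul_sub, smul_comm]
      _ = 0 := by
          rw [hw i, hl, smul_smul, sub_self]
  exact aux_contra x u hx hux (A i) (hApos i) i l (hdd i) hkey
    (fun j => hmax j (Finset.mem_univ j)) hm
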